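/- Let F be a finite acyclic simple graph (a forest) on a linearly ordered vertex set V of size n. Let the coin flips c : V → Bool be drawn uniformly at random from all such functions (equivalently, independent fair coins, one per vertex). Define the deleted set D(c) to consist of: (i) every isolated vertex (degree 0); (ii) every leaf v (degree 1) such that, letting u be the unique neighbor of v, either u is not a leaf or v < u; and (iii) every vertex v of degree exactly 2 such that both neighbors of v have degree at least 2, c(v) = true, and c(u) = false for both neighbors u of v. Then the expected size of D(c) is at least n/8. -/

import Mathlib

open SimpleGraph Finset

section Aux
variable {V : Type*} [Fintype V]

lemma exists_deg_one {G : SimpleGraph V} [DecidableRel G.Adj] (hacyc : G.IsAcyclic) {a b : V} (hab : G.Adj a b) :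
    ∃ u, G.degree u = 1 := by
  classical
  set n := Fintype.card V with hn
  set P : ℕ → Prop := fun k => ∃ (x y : V) (p : G.Walk x y), p.IsPath ∧ p.length = k with hP
  have hP1 : P 1 := ⟨a, b, SimpleGraph.Walk.cons hab SimpleGraph.Walk.nil, by simp [hab.ne], by simp⟩
  have h1n : 1 ≤ n := by
    have : 0 < n := Fintype.card_pos_iff.2 ⟨a⟩
    omega
  have hmax : ∀ m, P m → m ≤ Nat.findGreatest P n := by
    intro m hm
    have hm2 := hm
    obtain ⟨x, y, p, hp, hlen⟩ := hm2
    exact Nat.le_findGreatest (by have := hp.length_lt; omega) hm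
  obtain ⟨x, y, p, hp, hlen⟩ := Nat.findGreatest_spec h1n hP1
  have hk1 : 1 ≤ Nat.findGreatest P n := Nat.le_findGreatest h1n hP1
  -- p is not nil
  cases p with
  | nil => simp at hlen; omega
  | @cons _ z _ h q =>
    -- claim every neighbor of x equals z
    have hq : q.IsPath ∧ x ∉ q.support := (SimpleGraph.Walk.cons_isPath_iff h q).1 hp
    have key : ∀ w, G.Adj x w → w = z := by
      intro w hadj
      by_contra hwz
      by_cases hw : w ∈ (SimpleGraph.Walk.cons h q).support
      · -- build a cycle
        set r := (SimpleGraph.Walk.cons h q).takeUntil w hw with hr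
        have hrp : r.IsPath := hp.takeUntil hw
        have hedge : s(w, x) ∉ r.edges := by
          intro hmem
          have : s(w, x) ∈ (SimpleGraph.Walk.cons h q).edges :=
            SimpleGraph.Walk.edges_takeUntil_subset _ hw hmem
          rw [SimpleGraph.Walk.edges_cons] at this
          rcases List.mem_cons.1 this with heq | hmem'
          · rw [Sym2.eq_iff] at heq
            rcases heq with ⟨h1, h2⟩ | ⟨h1, h2⟩
            · exact hadj.ne' h1
            · exact hwz h1
          · exact hq.2 (SimpleGraph.Walk.snd_mem_support_of_mem_edges q hmem')
        have : (SimpleGraph.Walk.cons hadj.symm r).IsCycle :=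
          (SimpleGraph.Walk.cons_isCycle_iff r hadj.symm).2 ⟨hrp, hedge⟩
        exact hacyc _ this
      · -- extend the path
        have hlong : P ((SimpleGraph.Walk.cons h q).length + 1) := by
          refine ⟨w, y, SimpleGraph.Walk.cons hadj.symm (SimpleGraph.Walk.cons h q), ?_, by simp⟩
          rw [SimpleGraph.Walk.cons_isPath_iff]
          exact ⟨hp, hw⟩
        have := hmax _ hlong
        omega
    have hNz : G.neighborFinset x = {z} := by
      ext w
      simp only [mem_neighborFinset, Finset.mem_singleton]
      exact ⟨fun hw => key w hw, fun hw => hw ▸ h⟩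
    exact ⟨x, by rw [degree, hNz, Finset.card_singleton]⟩

lemma forest_bound : ∀ (m : ℕ) (G : SimpleGraph V) [DecidableRel G.Adj],
    G.edgeFinset.card = m → G.IsAcyclic →
    G.edgeFinset.card + (univ.filter (fun v => G.degree v = 0)).card ≤ Fintype.card V := by
  intro m
  induction m using Nat.strong_induction_on with
  | _ m ih =>
    intro G _ hm hacyc
    classical
    by_cases h0 : G.edgeFinset.card = 0
    · have : univ.filter (fun v => G.degree v = 0) = univ := by
        refine Finset.filter_true_of_mem (fun v _ => ?_)
        by_contra hd
        obtain ⟨w, hw⟩ := Finset.card_pos.1 (Nat.pos_of_ne_zero hd)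
        have : s(v, w) ∈ G.edgeFinset := by
          rw [mem_edgeFinset, mem_edgeSet]
          exact (mem_neighborFinset _ _ _).1 hw
        exact (Finset.card_pos.2 ⟨_, this⟩).ne' h0
      rw [h0, this]
      simp
    · obtain ⟨e, he⟩ := Finset.card_pos.1 (Nat.pos_of_ne_zero h0)
      rw [mem_edgeFinset] at he
      obtain ⟨a, b⟩ := e
      have hab : G.Adj a b := he
      obtain ⟨u, hu⟩ := exists_deg_one hacyc hab
      obtain ⟨w, hw⟩ := Finset.card_eq_one.1 hu
      have huw : G.Adj u w := (mem_neighborFinset _ _ _).1 (hw ▸ Finset.mem_singleton_self w)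
      set G' := G.deleteEdges {s(u, w)} with hG'
      have hadj' : ∀ x y, G'.Adj x y ↔ G.Adj x y ∧ s(x, y) ≠ s(u, w) := by
        intro x y; rw [hG', deleteEdges_adj]; simp
      haveI : DecidableRel G'.Adj := fun x y => decidable_of_iff _ (hadj' x y).symm
      have hacyc' : G'.IsAcyclic := by
        intro v c hc
        have hinj : Function.Injective ⇑(Hom.ofLE (deleteEdges_le (G := G) {s(u, w)})) :=
          fun x y hxy => hxy
        exact hacyc _ ((SimpleGraph.Walk.map_isCycle_iff_of_injective hinj).2 hc)
      have hEF : G'.edgeFinset = G.edgeFinset.erase s(u, w) := by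
        ext e
        rw [Finset.mem_erase, mem_edgeFinset, mem_edgeFinset, hG', edgeSet_deleteEdges]
        simp [and_comm]
      have hcard' : G'.edgeFinset.card = m - 1 := by
        rw [hEF, Finset.card_erase_of_mem (by rwa [mem_edgeFinset, mem_edgeSet]), hm]
      -- isolated vertices
      have hNsub : ∀ v, G'.neighborFinset v ⊆ G.neighborFinset v := by
        intro v x hx
        rw [mem_neighborFinset] at hx ⊢
        exact ((hadj' v x).1 hx).1
      have hiso : insert u (univ.filter (fun v => G.degree v = 0)) ⊆
          univ.filter (fun v => G'.degree v = 0) := by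
        intro v hv
        rcases Finset.mem_insert.1 hv with rfl | hv
        · simp only [Finset.mem_filter, Finset.mem_univ, true_and]
          rw [degree, Finset.card_eq_zero, Finset.eq_empty_iff_forall_notMem]
          intro x hx
          have hx' := (hadj' v x).1 ((mem_neighborFinset _ _ _).1 hx)
          have : x ∈ G.neighborFinset v := (mem_neighborFinset _ _ _).2 hx'.1
          rw [hw, Finset.mem_singleton] at this
          exact hx'.2 (by rw [this])
        · simp only [Finset.mem_filter, Finset.mem_univ, true_and] at hv ⊢
          rw [degree, Finset.card_eq_zero] at hv ⊢
          exact Finset.subset_empty.1 (hv ▸ hNsub v)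
      have hisocard : (univ.filter (fun v => G.degree v = 0)).card + 1 ≤
          (univ.filter (fun v => G'.degree v = 0)).card := by
        have hnotmem : u ∉ univ.filter (fun v => G.degree v = 0) := by
          simp [hu]
        calc (univ.filter (fun v => G.degree v = 0)).card + 1
            = (insert u (univ.filter (fun v => G.degree v = 0))).card := by
              rw [Finset.card_insert_of_notMem hnotmem]
          _ ≤ _ := Finset.card_le_card hiso
      have hm1 : m - 1 < m := by omega
      have := ih (m - 1) hm1 G' hcard' hacyc'
      rw [hcard'] at this
      omega

end Aux

section Main
variable {V : Type*} [Fintype V] [LinearOrder V]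

lemma comb_bound (G : SimpleGraph V) [DecidableRel G.Adj] (hacyc : G.IsAcyclic) :
    Fintype.card V ≤
      (univ.filter (fun v => G.degree v = 0)).card +
      6 * (univ.filter (fun v => G.degree v = 1 ∧
            ∀ u ∈ G.neighborFinset v, G.degree u ≠ 1 ∨ v < u)).card +
      (univ.filter (fun v => G.degree v = 2 ∧
            ∀ u ∈ G.neighborFinset v, 2 ≤ G.degree u)).card := by
  classical
  set A := univ.filter (fun v => G.degree v = 0) with hA
  set B := univ.filter (fun v => G.degree v = 1 ∧
      ∀ u ∈ G.neighborFinset v, G.degree u ≠ 1 ∨ v < u) with hB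
  set C := univ.filter (fun v => G.degree v = 2 ∧
      ∀ u ∈ G.neighborFinset v, 2 ≤ G.degree u) with hC
  set L := univ.filter (fun v => G.degree v = 1) with hL
  set D2 := univ.filter (fun v => G.degree v = 2) with hD2
  set D3 := univ.filter (fun v => 3 ≤ G.degree v) with hD3
  -- partition of vertices by degree
  have hpart : A.card + L.card + D2.card + D3.card = Fintype.card V := by
    simp only [hA, hL, hD2, hD3]
    rw [Finset.card_filter, Finset.card_filter, Finset.card_filter, Finset.card_filter,
      ← Finset.sum_add_distrib, ← Finset.sum_add_distrib, ← Finset.sum_add_distrib,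
      ← Finset.card_univ, Finset.card_eq_sum_ones]
    refine Finset.sum_congr rfl (fun v _ => ?_)
    split_ifs <;> omega
  -- degree sum bound
  have hdegsum : L.card + 2 * D2.card + 3 * D3.card ≤ 2 * G.edgeFinset.card := by
    rw [← G.sum_degrees_eq_twice_card_edges, hL, hD2, hD3,
      Finset.card_filter, Finset.card_filter, Finset.card_filter,
      Finset.mul_sum, Finset.mul_sum, ← Finset.sum_add_distrib, ← Finset.sum_add_distrib]
    refine Finset.sum_le_sum (fun v _ => ?_)
    split_ifs <;> omega
  -- forest bound
  have hforest : G.edgeFinset.card + A.card ≤ Fintype.card V :=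
    forest_bound G.edgeFinset.card G rfl hacyc
  -- every vertex adjacent to something has degree ≥ 1
  have hdeg1 : ∀ {x y : V}, G.Adj x y → 1 ≤ G.degree y := by
    intro x y hxy
    rw [← card_neighborFinset_eq_degree]
    exact Finset.card_pos.2 ⟨x, (mem_neighborFinset _ _ _).2 hxy.symm⟩
  -- L ≤ 2 B
  have hLB : L.card ≤ 2 * B.card := by
    have hsplit : (L.filter (fun v => ∀ u ∈ G.neighborFinset v, G.degree u ≠ 1 ∨ v < u)).card
        + (L.filter (fun v => ¬ ∀ u ∈ G.neighborFinset v, G.degree u ≠ 1 ∨ v < u)).card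
        = L.card := Finset.card_filter_add_card_filter_not _
    have hLfB : L.filter (fun v => ∀ u ∈ G.neighborFinset v, G.degree u ≠ 1 ∨ v < u) = B := by
      rw [hL, hB, Finset.filter_filter]
    set Lbad := L.filter (fun v => ¬ ∀ u ∈ G.neighborFinset v, G.degree u ≠ 1 ∨ v < u) with hLbad
    rw [hLfB] at hsplit
    have hinj : Lbad.card ≤ B.card := by
      set f : V → V := fun v =>
        if h : ((G.neighborFinset v).filter (fun u => G.degree u = 1 ∧ u ≤ v)).Nonempty
        then ((G.neighborFinset v).filter (fun u => G.degree u = 1 ∧ u ≤ v)).min' h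
        else v with hf
      have hfv : ∀ v ∈ Lbad, G.Adj v (f v) ∧ G.degree (f v) = 1 ∧ f v < v := by
        intro v hv
        rw [hLbad, Finset.mem_filter, hL, Finset.mem_filter] at hv
        obtain ⟨⟨_, hdv⟩, hnall⟩ := hv
        push_neg at hnall
        obtain ⟨u, hu, hdu, hvu⟩ := hnall
        have hne : ((G.neighborFinset v).filter (fun u => G.degree u = 1 ∧ u ≤ v)).Nonempty :=
          ⟨u, Finset.mem_filter.2 ⟨hu, hdu, hvu⟩⟩
        have hmem := Finset.min'_mem _ hne
        rw [Finset.mem_filter, mem_neighborFinset] at hmem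
        have hfeq : f v = ((G.neighborFinset v).filter (fun u => G.degree u = 1 ∧ u ≤ v)).min' hne := by
          simp only [hf]; rw [dif_pos hne]
        rw [hfeq]
        exact ⟨hmem.1, hmem.2.1, lt_of_le_of_ne hmem.2.2 hmem.1.ne'⟩
      refine Finset.card_le_card_of_injOn f (fun v hv => ?_) (fun v hv v' hv' heq => ?_)
      · obtain ⟨hadj, hdeg, hlt⟩ := hfv v hv
        rw [hB, Finset.mem_coe, Finset.mem_filter]
        refine ⟨Finset.mem_univ _, hdeg, fun w hw => ?_⟩
        have hN : G.neighborFinset (f v) = {v} := by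
          obtain ⟨y, hy⟩ := Finset.card_eq_one.1
            (show (G.neighborFinset (f v)).card = 1 from hdeg)
          have hvmem : v ∈ G.neighborFinset (f v) := (mem_neighborFinset _ _ _).2 hadj.symm
          rw [hy] at hvmem ⊢
          rw [Finset.mem_singleton] at hvmem
          rw [hvmem]
        rw [hN, Finset.mem_singleton] at hw
        subst hw
        exact Or.inr hlt
      · obtain ⟨hadj, hdeg, _⟩ := hfv v hv
        obtain ⟨hadj', _, _⟩ := hfv v' hv'
        rw [heq] at hadj
        have hcard : (G.neighborFinset (f v')).card ≤ 1 := by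
          rw [card_neighborFinset_eq_degree]; omega
        exact Finset.card_le_one.1 hcard v ((mem_neighborFinset _ _ _).2 hadj.symm)
          v' ((mem_neighborFinset _ _ _).2 hadj'.symm)
    omega
  -- D2 ≤ C + D2bad, D2bad ≤ L
  have hD2split : (D2.filter (fun v => ∀ u ∈ G.neighborFinset v, 2 ≤ G.degree u)).card
      + (D2.filter (fun v => ¬ ∀ u ∈ G.neighborFinset v, 2 ≤ G.degree u)).card
      = D2.card := Finset.card_filter_add_card_filter_not _
  have hD2C : D2.filter (fun v => ∀ u ∈ G.neighborFinset v, 2 ≤ G.degree u) = C := by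
    rw [hD2, hC, Finset.filter_filter]
  rw [hD2C] at hD2split
  have hbadL : (D2.filter (fun v => ¬ ∀ u ∈ G.neighborFinset v, 2 ≤ G.degree u)).card ≤ L.card := by
    set Dbad := D2.filter (fun v => ¬ ∀ u ∈ G.neighborFinset v, 2 ≤ G.degree u) with hDbad
    set g : V → V := fun v =>
      if h : ((G.neighborFinset v).filter (fun u => G.degree u = 1)).Nonempty
      then ((G.neighborFinset v).filter (fun u => G.degree u = 1)).min' h
      else v with hg
    have hgv : ∀ v ∈ Dbad, G.Adj v (g v) ∧ G.degree (g v) = 1 := by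
      intro v hv
      rw [hDbad, Finset.mem_filter] at hv
      obtain ⟨_, hnall⟩ := hv
      push_neg at hnall
      obtain ⟨u, hu, hdu⟩ := hnall
      have hdu1 : G.degree u = 1 := by
        have := hdeg1 ((mem_neighborFinset _ _ _).1 hu)
        omega
      have hne : ((G.neighborFinset v).filter (fun u => G.degree u = 1)).Nonempty :=
        ⟨u, Finset.mem_filter.2 ⟨hu, hdu1⟩⟩
      have hmem := Finset.min'_mem _ hne
      rw [Finset.mem_filter, mem_neighborFinset] at hmem
      have hgeq : g v = ((G.neighborFinset v).filter (fun u => G.degree u = 1)).min' hne := by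
        simp only [hg]; rw [dif_pos hne]
      rw [hgeq]
      exact ⟨hmem.1, hmem.2⟩
    refine Finset.card_le_card_of_injOn g (fun v hv => ?_) (fun v hv v' hv' heq => ?_)
    · obtain ⟨_, hdeg⟩ := hgv v hv
      rw [hL, Finset.mem_coe, Finset.mem_filter]
      exact ⟨Finset.mem_univ _, hdeg⟩
    · obtain ⟨hadj, hdeg⟩ := hgv v hv
      obtain ⟨hadj', _⟩ := hgv v' hv'
      rw [heq] at hadj
      have hcard : (G.neighborFinset (g v')).card ≤ 1 := by
        rw [card_neighborFinset_eq_degree]; omega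
      exact Finset.card_le_one.1 hcard v ((mem_neighborFinset _ _ _).2 hadj.symm)
        v' ((mem_neighborFinset _ _ _).2 hadj'.symm)
  omega

end Main

section Fixed
lemma card_fixed {V : Type*} [Fintype V] [DecidableEq V] (S : Finset V) (f : V → Bool) :
    (univ.filter (fun c : V → Bool => ∀ s ∈ S, c s = f s)).card
      = 2 ^ (Fintype.card V - S.card) := by
  classical
  have e : {c : V → Bool // ∀ s ∈ S, c s = f s} ≃ ((Sᶜ : Finset V) → Bool) :=
    { toFun := fun c x => c.1 x.1
      invFun := fun g => ⟨fun v => if h : v ∈ S then f v else g ⟨v, Finset.mem_compl.2 h⟩,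
        fun s hs => dif_pos hs⟩
      left_inv := fun c => by
        ext v
        dsimp only
        split
        · exact (c.2 v ‹_›).symm
        · rfl
      right_inv := fun g => by
        ext x
        dsimp only
        rw [dif_neg (Finset.mem_compl.1 x.2)] }
  have h1 : (univ.filter (fun c : V → Bool => ∀ s ∈ S, c s = f s)).card
      = Fintype.card {c : V → Bool // ∀ s ∈ S, c s = f s} := (Fintype.card_subtype _).symm
  rw [h1, Fintype.card_congr e, Fintype.card_fun]
  simp [Finset.card_compl]
end Fixed

theorem stmt_4 {V : Type*} [Fintype V] [LinearOrder V] (G : SimpleGraph V)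
    [DecidableRel G.Adj] (hacyc : G.IsAcyclic) :
    (Fintype.card V : ℝ) / 8 ≤
      (∑ c : V → Bool,
        ((Finset.univ.filter (fun v =>
            G.degree v = 0 ∨
            (G.degree v = 1 ∧ ∀ u ∈ G.neighborFinset v, G.degree u ≠ 1 ∨ v < u) ∨
            (G.degree v = 2 ∧ (∀ u ∈ G.neighborFinset v, 2 ≤ G.degree u) ∧
              c v = true ∧ ∀ u ∈ G.neighborFinset v, c u = false))).card : ℝ)) /
        2 ^ Fintype.card V := by
  classical
  set n := Fintype.card V with hn
  -- the key natural number inequality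
  have key : n * 2 ^ n ≤ 8 * ∑ c : V → Bool,
      (Finset.univ.filter (fun v =>
            G.degree v = 0 ∨
            (G.degree v = 1 ∧ ∀ u ∈ G.neighborFinset v, G.degree u ≠ 1 ∨ v < u) ∨
            (G.degree v = 2 ∧ (∀ u ∈ G.neighborFinset v, 2 ≤ G.degree u) ∧
              c v = true ∧ ∀ u ∈ G.neighborFinset v, c u = false))).card := by
    have hswap : ∑ c : V → Bool,
        (Finset.univ.filter (fun v =>
            G.degree v = 0 ∨
            (G.degree v = 1 ∧ ∀ u ∈ G.neighborFinset v, G.degree u ≠ 1 ∨ v < u) ∨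
            (G.degree v = 2 ∧ (∀ u ∈ G.neighborFinset v, 2 ≤ G.degree u) ∧
              c v = true ∧ ∀ u ∈ G.neighborFinset v, c u = false))).card
        = ∑ v : V, (Finset.univ.filter (fun c : V → Bool =>
            G.degree v = 0 ∨
            (G.degree v = 1 ∧ ∀ u ∈ G.neighborFinset v, G.degree u ≠ 1 ∨ v < u) ∨
            (G.degree v = 2 ∧ (∀ u ∈ G.neighborFinset v, 2 ≤ G.degree u) ∧
              c v = true ∧ ∀ u ∈ G.neighborFinset v, c u = false))).card := by
      simp only [Finset.card_filter]
      exact Finset.sum_comm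
    set N : V → ℕ := fun v => (Finset.univ.filter (fun c : V → Bool =>
        G.degree v = 0 ∨
        (G.degree v = 1 ∧ ∀ u ∈ G.neighborFinset v, G.degree u ≠ 1 ∨ v < u) ∨
        (G.degree v = 2 ∧ (∀ u ∈ G.neighborFinset v, 2 ≤ G.degree u) ∧
          c v = true ∧ ∀ u ∈ G.neighborFinset v, c u = false))).card with hN
    rw [hswap]
    set A := univ.filter (fun v => G.degree v = 0) with hA
    set B := univ.filter (fun v => G.degree v = 1 ∧
        ∀ u ∈ G.neighborFinset v, G.degree u ≠ 1 ∨ v < u) with hB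
    set C := univ.filter (fun v => G.degree v = 2 ∧
        ∀ u ∈ G.neighborFinset v, 2 ≤ G.degree u) with hC
    have hcomb : n ≤ A.card + 6 * B.card + C.card := comb_bound G hacyc
    -- N v = 2^n for v in A ∪ B
    have hAB : ∀ v ∈ A ∪ B, N v = 2 ^ n := by
      intro v hv
      have hfull : (Finset.univ.filter (fun c : V → Bool =>
          G.degree v = 0 ∨
          (G.degree v = 1 ∧ ∀ u ∈ G.neighborFinset v, G.degree u ≠ 1 ∨ v < u) ∨
          (G.degree v = 2 ∧ (∀ u ∈ G.neighborFinset v, 2 ≤ G.degree u) ∧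
            c v = true ∧ ∀ u ∈ G.neighborFinset v, c u = false))) = univ := by
        refine Finset.filter_true_of_mem (fun c _ => ?_)
        rcases Finset.mem_union.1 hv with hv | hv
        · exact Or.inl ((Finset.mem_filter.1 hv).2)
        · exact Or.inr (Or.inl ((Finset.mem_filter.1 hv).2))
      rw [hN]
      simp only [hfull]
      rw [Finset.card_univ, Fintype.card_fun, Fintype.card_bool]
    -- N v ≥ 2^(n-3) for v in C
    have hCN : ∀ v ∈ C, 2 ^ (n - 3) ≤ N v := by
      intro v hv
      rw [hC, Finset.mem_filter] at hv
      obtain ⟨-, hd2, hnb⟩ := hv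
      set S := insert v (G.neighborFinset v) with hS
      have hScard : S.card = 3 := by
        rw [hS, Finset.card_insert_of_notMem (G.notMem_neighborFinset_self v),
          card_neighborFinset_eq_degree, hd2]
      have hsub : (univ.filter (fun c : V → Bool => ∀ s ∈ S, c s = decide (s = v)))
          ⊆ (Finset.univ.filter (fun c : V → Bool =>
          G.degree v = 0 ∨
          (G.degree v = 1 ∧ ∀ u ∈ G.neighborFinset v, G.degree u ≠ 1 ∨ v < u) ∨
          (G.degree v = 2 ∧ (∀ u ∈ G.neighborFinset v, 2 ≤ G.degree u) ∧
            c v = true ∧ ∀ u ∈ G.neighborFinset v, c u = false))) := by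
        intro c hc
        rw [Finset.mem_filter] at hc ⊢
        refine ⟨Finset.mem_univ _, Or.inr (Or.inr ⟨hd2, hnb, ?_, ?_⟩)⟩
        · have := hc.2 v (Finset.mem_insert_self _ _)
          simpa using this
        · intro u hu
          have hne : u ≠ v := (G.ne_of_adj ((mem_neighborFinset _ _ _).1 hu)).symm
          have := hc.2 u (Finset.mem_insert_of_mem hu)
          simpa [hne] using this
      have := Finset.card_le_card hsub
      rw [card_fixed S (fun s => decide (s = v)), hScard] at this
      exact this
    have hCn3 : C.Nonempty → 3 ≤ n := by
      rintro ⟨v, hv⟩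
      rw [hC, Finset.mem_filter] at hv
      have : (insert v (G.neighborFinset v)).card = 3 := by
        rw [Finset.card_insert_of_notMem (G.notMem_neighborFinset_self v),
          card_neighborFinset_eq_degree, hv.2.1]
      calc 3 = (insert v (G.neighborFinset v)).card := this.symm
        _ ≤ (univ : Finset V).card := Finset.card_le_card (Finset.subset_univ _)
        _ = n := by rw [Finset.card_univ]
    -- disjointness
    have hdisjAB : Disjoint A B := by
      rw [Finset.disjoint_left]
      intro v hv hv'
      rw [hA, Finset.mem_filter] at hv
      rw [hB, Finset.mem_filter] at hv'
      exact absurd (hv.2.symm.trans hv'.2.1) (by norm_num)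
    have hdisjABC : Disjoint (A ∪ B) C := by
      rw [Finset.disjoint_left]
      intro v hv hv'
      rw [hC, Finset.mem_filter] at hv'
      rcases Finset.mem_union.1 hv with hv | hv
      · rw [hA, Finset.mem_filter] at hv
        exact absurd (hv.2.symm.trans hv'.2.1) (by norm_num)
      · rw [hB, Finset.mem_filter] at hv
        exact absurd (hv.2.1.symm.trans hv'.2.1) (by norm_num)
    have hsum : (A.card + B.card) * 2 ^ n + C.card * 2 ^ (n - 3) ≤ ∑ v : V, N v := by
      calc (A.card + B.card) * 2 ^ n + C.card * 2 ^ (n - 3)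
          = (A ∪ B).card * 2 ^ n + C.card * 2 ^ (n - 3) := by
            rw [Finset.card_union_of_disjoint hdisjAB]
        _ ≤ (∑ v ∈ A ∪ B, N v) + ∑ v ∈ C, N v := by
            refine Nat.add_le_add ?_ ?_
            · calc (A ∪ B).card * 2 ^ n = ∑ _v ∈ A ∪ B, 2 ^ n := by
                    rw [Finset.sum_const, smul_eq_mul]
                _ = ∑ v ∈ A ∪ B, N v := Finset.sum_congr rfl (fun v hv => (hAB v hv).symm)
                _ ≤ ∑ v ∈ A ∪ B, N v := le_rfl
            · calc C.card * 2 ^ (n - 3) = ∑ _v ∈ C, 2 ^ (n - 3) := by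
                    rw [Finset.sum_const, smul_eq_mul]
                _ ≤ ∑ v ∈ C, N v := Finset.sum_le_sum hCN
        _ = ∑ v ∈ (A ∪ B) ∪ C, N v := (Finset.sum_union hdisjABC).symm
        _ ≤ ∑ v : V, N v := Finset.sum_le_sum_of_subset (Finset.subset_univ _)
    -- conclude
    clear_value N A B C
    clear hN hA hB hC hswap hAB hCN
    by_cases hCe : C = ∅
    · rw [hCe] at hsum hcomb
      simp at hsum hcomb
      calc n * 2 ^ n ≤ (8 * (A.card + B.card)) * 2 ^ n := by
            refine Nat.mul_le_mul_right _ ?_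
            omega
        _ = 8 * ((A.card + B.card) * 2 ^ n) := by ring
        _ ≤ 8 * ∑ v : V, N v := Nat.mul_le_mul_left _ hsum
    · have h3n : 3 ≤ n := hCn3 (Finset.nonempty_of_ne_empty hCe)
      have h8 : 2 ^ n = 8 * 2 ^ (n - 3) := by
        have hh : n - 3 + 3 = n := by omega
        conv_lhs => rw [← hh]
        rw [pow_add]
        ring
      calc n * 2 ^ n ≤ (8 * A.card + 8 * B.card + C.card) * 2 ^ n := by
            refine Nat.mul_le_mul_right _ ?_
            omega
        _ = 8 * ((A.card + B.card) * 2 ^ n + C.card * 2 ^ (n - 3)) := by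
            rw [h8]; ring
        _ ≤ 8 * ∑ v : V, N v := Nat.mul_le_mul_left _ hsum
  -- transfer to the reals
  rw [div_le_div_iff₀ (by norm_num : (0:ℝ) < 8) (by positivity : (0:ℝ) < 2 ^ n)]
  rw [← Nat.cast_sum]
  calc (n : ℝ) * 2 ^ n = ((n * 2 ^ n : ℕ) : ℝ) := by push_cast; ring
    _ ≤ ((8 * ∑ c : V → Bool,
      (Finset.univ.filter (fun v =>
            G.degree v = 0 ∨
            (G.degree v = 1 ∧ ∀ u ∈ G.neighborFinset v, G.degree u ≠ 1 ∨ v < u) ∨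
            (G.degree v = 2 ∧ (∀ u ∈ G.neighborFinset v, 2 ≤ G.degree u) ∧
              c v = true ∧ ∀ u ∈ G.neighborFinset v, c u = false))).card : ℕ) : ℝ) := by
        exact_mod_cast key
    _ = _ := by push_cast; ring
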